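/- Let Σ be an r-dimensional complete fan in ℝ^r such that for every cone δ ∈ Σ of dimension r-2 the star fan Star(δ) is centrally symmetric. Then Σ is strongly symmetric, i.e., for every τ ∈ Σ(r-1) the span of τ is contained in the support of Σ(r-1). -/

import Mathlib

open scoped Classical Pointwise BigOperators

noncomputable section

abbrev Vr (r : ℕ) : Type := Fin r → ℝ

/-- The convex cone generated by a finite set of vectors. -/
def coneGen {M : Type*} [AddCommGroup M] [Module ℝ M] (s : Finset M) : Set M :=
  { x | ∃ c : M → ℝ, (∀ v, 0 ≤ c v) ∧ x = ∑ v ∈ s, c v • v }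

/-- Dimension of the linear span of a set. -/
def spanDim {M : Type*} [AddCommGroup M] [Module ℝ M] (s : Set M) : ℕ :=
  Module.finrank ℝ (Submodule.span ℝ s)

/-- A (linear) hyperplane: the kernel of a nonzero linear functional. -/
def IsHyp {M : Type*} [AddCommGroup M] [Module ℝ M] (H : Set M) : Prop :=
  ∃ f : M →ₗ[ℝ] ℝ, f ≠ 0 ∧ H = {x | f x = 0}

/-- A strongly convex rational polyhedral cone with respect to the lattice `N`. -/
def IsNCone {r : ℕ} (N : AddSubgroup (Vr r)) (σ : Set (Vr r)) : Prop :=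
  ∃ s : Finset (Vr r), ↑s ⊆ (N : Set (Vr r)) ∧ σ = coneGen s ∧ σ ∩ (-σ) ⊆ {0}

/-- `τ` is a face of `σ`. -/
def IsFaceOf {M : Type*} [AddCommGroup M] [Module ℝ M] (τ σ : Set M) : Prop :=
  ∃ m : M →ₗ[ℝ] ℝ, (∀ x ∈ σ, 0 ≤ m x) ∧ τ = σ ∩ {x | m x = 0}

/-- A fan in the lattice `N`. -/
structure IsFan {r : ℕ} (N : AddSubgroup (Vr r)) (F : Set (Set (Vr r))) : Prop where
  finite : F.Finite
  nonempty : F.Nonempty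
  cones : ∀ σ ∈ F, IsNCone N σ
  faces : ∀ σ ∈ F, ∀ τ : Set (Vr r), IsFaceOf τ σ → τ ∈ F
  inter : ∀ σ₁ ∈ F, ∀ σ₂ ∈ F, IsFaceOf (σ₁ ∩ σ₂) σ₁ ∧ IsFaceOf (σ₁ ∩ σ₂) σ₂

/-- Completeness: the support is everything. -/
def FanComplete {M : Type*} (F : Set (Set M)) : Prop := ⋃₀ F = Set.univ

/-- Strong symmetry: complete, and the support of the codimension-one cones is a
finite union of hyperplanes. -/
def SSymm {M : Type*} [AddCommGroup M] [Module ℝ M] (F : Set (Set M)) : Prop :=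
  FanComplete F ∧ ∃ Hs : Finset (Set M), (∀ h ∈ Hs, IsHyp h) ∧
    ⋃₀ {τ ∈ F | spanDim τ = Module.finrank ℝ M - 1} = ⋃₀ ↑Hs

/-- Central symmetry. -/
def CSymm {M : Type*} [AddCommGroup M] (F : Set (Set M)) : Prop := ∀ σ ∈ F, -σ ∈ F

/-- `b` is a ℤ-basis of the subgroup `L` of `ℝ^r`. -/
def IsZBasis {r d : ℕ} (L : AddSubgroup (Vr r)) (b : Fin d → Vr r) : Prop :=
  LinearIndependent ℝ b ∧ AddSubgroup.closure (Set.range b) = L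

/-- A (full-rank) lattice in `ℝ^r`. -/
def IsLattice {r : ℕ} (N : AddSubgroup (Vr r)) : Prop :=
  ∃ b : Fin r → Vr r, IsZBasis N b

/-- A cone generated by a part of a ℤ-basis of `L`. -/
def SmoothCone {r : ℕ} (L : AddSubgroup (Vr r)) (σ : Set (Vr r)) : Prop :=
  ∃ (d : ℕ) (b : Fin d → Vr r) (s : Finset (Fin d)),
    IsZBasis L b ∧ σ = coneGen (s.image b)

/-- Chambers of an arrangement: connected components of the complement. -/
def chambers {r : ℕ} (A : Finset (Set (Vr r))) : Set (Set (Vr r)) :=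
  { K | ∃ x ∈ (⋃₀ (A : Set (Set (Vr r))))ᶜ,
      K = connectedComponentIn (⋃₀ (A : Set (Set (Vr r))))ᶜ x }

/-- An open simplicial cone of full dimension. -/
def IsOpenSimplicialCone {r : ℕ} (K : Set (Vr r)) : Prop :=
  ∃ b : Fin r → Vr r, LinearIndependent ℝ b ∧
    K = { x | ∃ c : Fin r → ℝ, (∀ i, 0 < c i) ∧ x = ∑ i, c i • b i }

def ker0 {r : ℕ} (α : Vr r →ₗ[ℝ] ℝ) : Set (Vr r) := {x | α x = 0}

/-- Walls of a chamber `K`. -/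
def walls {r : ℕ} (A : Finset (Set (Vr r))) (K : Set (Vr r)) : Set (Set (Vr r)) :=
  { H | H ∈ A ∧ spanDim (H ∩ closure K) = r - 1 }

/-- The set `B^K` of inward-pointing normals of the walls of `K`. -/
def BK {r : ℕ} (A : Finset (Set (Vr r))) (R : Finset (Vr r →ₗ[ℝ] ℝ)) (K : Set (Vr r)) :
    Finset (Vr r →ₗ[ℝ] ℝ) :=
  R.filter (fun α => ker0 α ∈ walls A K ∧ K ⊆ {x | 0 ≤ α x})

/-- A crystallographic arrangement `(A, R)`. -/
structure IsCrystArr {r : ℕ} (A : Finset (Set (Vr r))) (R : Finset (Vr r →ₗ[ℝ] ℝ)) : Prop where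
  simplicial : ∀ K ∈ chambers A, IsOpenSimplicialCone K
  hyps : (A : Set (Set (Vr r))) = (fun α => ker0 α) '' (R : Set (Vr r →ₗ[ℝ] ℝ))
  nonzero : ∀ α ∈ R, α ≠ 0
  neg_mem : ∀ α ∈ R, -α ∈ R
  reduced : ∀ α ∈ R, ∀ β ∈ R, (∃ c : ℝ, β = c • α) → β = α ∨ β = -α
  integral : ∀ K ∈ chambers A, ∀ β ∈ R,
    β ∈ Submodule.span ℤ ((BK A R K : Set (Vr r →ₗ[ℝ] ℝ)))

/-- The set of all intersections of closed chambers of `A`. -/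
def closedChamberInts {r : ℕ} (A : Finset (Set (Vr r))) : Set (Set (Vr r)) :=
  { σ | ∃ S : Set (Set (Vr r)), S.Nonempty ∧ S ⊆ chambers A ∧ σ = ⋂₀ (closure '' S) }

/-- The lattice dual to `M_R = ∑_{α ∈ R} ℤ α`. -/
def dualLattice {r : ℕ} (R : Finset (Vr r →ₗ[ℝ] ℝ)) : AddSubgroup (Vr r) where
  carrier := { x | ∀ α ∈ R, ∃ k : ℤ, α x = k }
  zero_mem' := fun α _ => ⟨0, by simp⟩
  add_mem' := by
    intro x y hx hy α hα
    obtain ⟨k, hk⟩ := hx α hα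
    obtain ⟨m, hm⟩ := hy α hα
    exact ⟨k + m, by simp [hk, hm]⟩
  neg_mem' := by
    intro x hx α hα
    obtain ⟨k, hk⟩ := hx α hα
    exact ⟨-k, by simp [hk]⟩

/-- The star fan of `δ`, as a collection of cones in the quotient by `E`. -/
def starAt {r : ℕ} (F : Set (Set (Vr r))) (δ : Set (Vr r)) (E : Submodule ℝ (Vr r)) :
    Set (Set (Vr r ⧸ E)) :=
  { τ | ∃ σ ∈ F, δ ⊆ σ ∧ τ = E.mkQ '' σ }

/-- The positive roots `R_+^K` at the chamber `K`. -/
def RplusF {r : ℕ} (A : Finset (Set (Vr r))) (R : Finset (Vr r →ₗ[ℝ] ℝ)) (K : Set (Vr r)) :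
    Finset (Vr r →ₗ[ℝ] ℝ) :=
  R.filter (fun α => α ∈ coneGen (BK A R K))

/-- `ρ^K`, the half-sum of the positive roots at `K`. -/
def rhoK {r : ℕ} (A : Finset (Set (Vr r))) (R : Finset (Vr r →ₗ[ℝ] ℝ)) (K : Set (Vr r)) :
    Vr r →ₗ[ℝ] ℝ :=
  (1/2 : ℝ) • ∑ α ∈ RplusF A R K, α

end

noncomputable section Aux

open Submodule Module Set

variable {r : ℕ}

/-! ### Basic facts about `coneGen` -/

lemma coneGen_zero_mem {M : Type*} [AddCommGroup M] [Module ℝ M] (s : Finset M) :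
    (0 : M) ∈ coneGen s :=
  ⟨0, fun _ => le_refl 0, by simp⟩

lemma coneGen_add {M : Type*} [AddCommGroup M] [Module ℝ M] {s : Finset M} {x y : M}
    (hx : x ∈ coneGen s) (hy : y ∈ coneGen s) : x + y ∈ coneGen s := by
  obtain ⟨c, hc, rfl⟩ := hx
  obtain ⟨d, hd, rfl⟩ := hy
  exact ⟨c + d, fun v => add_nonneg (hc v) (hd v), by
    simp [add_smul, Finset.sum_add_distrib]⟩

lemma coneGen_smul {M : Type*} [AddCommGroup M] [Module ℝ M] {s : Finset M} {x : M} {t : ℝ}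
    (ht : 0 ≤ t) (hx : x ∈ coneGen s) : t • x ∈ coneGen s := by
  obtain ⟨c, hc, rfl⟩ := hx
  exact ⟨t • c, fun v => mul_nonneg ht (hc v), by
    simp [Finset.smul_sum, smul_smul]⟩

lemma coneGen_convex {M : Type*} [AddCommGroup M] [Module ℝ M] (s : Finset M) :
    Convex ℝ (coneGen s) := fun x hx y hy a b ha hb _ =>
  coneGen_add (coneGen_smul ha hx) (coneGen_smul hb hy)

lemma subset_coneGen {M : Type*} [AddCommGroup M] [Module ℝ M] (s : Finset M) :
    (s : Set M) ⊆ coneGen s := by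
  intro v hv
  refine ⟨fun w => if w = v then 1 else 0, fun w => by positivity, ?_⟩
  rw [Finset.sum_eq_single v]
  · simp
  · intro w _ hw; simp [hw]
  · intro h; exact absurd hv h

lemma coneGen_subset_span {M : Type*} [AddCommGroup M] [Module ℝ M] (s : Finset M) :
    coneGen s ⊆ (span ℝ (s : Set M) : Set M) := by
  rintro x ⟨c, hc, rfl⟩
  exact Submodule.sum_smul_mem _ _ fun v hv => Submodule.subset_span hv

lemma span_coneGen {M : Type*} [AddCommGroup M] [Module ℝ M] (s : Finset M) :
    span ℝ (coneGen s) = span ℝ (s : Set M) := by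
  refine le_antisymm (Submodule.span_le.2 (coneGen_subset_span s)) (Submodule.span_mono (subset_coneGen s))

/-- subtype-indexed characterisation of membership in `coneGen`. -/
lemma mem_coneGen_iff {M : Type*} [AddCommGroup M] [Module ℝ M] {s : Finset M} {x : M} :
    x ∈ coneGen s ↔ ∃ c : {v // v ∈ s} → ℝ, (∀ i, 0 ≤ c i) ∧ x = ∑ i : {v // v ∈ s}, c i • (i : M) := by
  constructor
  · rintro ⟨c, hc, rfl⟩
    refine ⟨fun i => c i, fun i => hc i, ?_⟩
    rw [← Finset.sum_attach s (fun v => c v • v)]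
    simp [Finset.univ_eq_attach]
  · rintro ⟨c, hc, rfl⟩
    refine ⟨fun v => if h : v ∈ s then c ⟨v, h⟩ else 0, fun v => by
      by_cases h : v ∈ s <;> simp [h, hc], ?_⟩
    rw [← Finset.sum_attach s (fun v => (if h : v ∈ s then c ⟨v, h⟩ else 0) • v)]
    simp [Finset.univ_eq_attach]

end Aux

noncomputable section Aux2

open Submodule Module Set

lemma coneGen_mono {M : Type*} [AddCommGroup M] [Module ℝ M] {t s : Finset M} (hts : t ⊆ s) :
    coneGen t ⊆ coneGen s := by
  rintro x ⟨c, hc, rfl⟩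
  refine ⟨fun v => if v ∈ t then c v else 0, fun v => by by_cases h : v ∈ t <;> simp [h, hc], ?_⟩
  rw [← Finset.sum_subset hts (fun v _ hv => by simp [hv])]
  exact Finset.sum_congr rfl fun v hv => by simp [hv]

lemma coneGen_caratheodory {M : Type*} [AddCommGroup M] [Module ℝ M] :
    ∀ (s : Finset M), ∀ x ∈ coneGen s, ∃ t ⊆ s,
      LinearIndependent ℝ (fun i : {v // v ∈ t} => (i : M)) ∧ x ∈ coneGen t := by
  intro s
  induction s using Finset.strongInduction with
  | _ s ih =>
    intro x hx
    by_cases hind : LinearIndependent ℝ (fun i : {v // v ∈ s} => (i : M))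
    · exact ⟨s, le_refl _, hind, hx⟩
    · obtain ⟨g, hg0, i₁, hi₁⟩ := Fintype.not_linearIndependent_iff.1 hind
      -- WLOG some coordinate of g is positive
      obtain ⟨g, hg0, i₁, hi₁⟩ : ∃ g : {v // v ∈ s} → ℝ,
          ∑ i, g i • (i : M) = 0 ∧ ∃ i, 0 < g i := by
        rcases lt_or_ge 0 (g i₁) with h | h
        · exact ⟨g, hg0, i₁, h⟩
        · refine ⟨-g, by simpa using congrArg Neg.neg hg0, i₁, ?_⟩
          simp only [Pi.neg_apply]
          cases' lt_or_eq_of_le h with h' h'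
          · linarith
          · exact absurd h' hi₁
      obtain ⟨c, hc, hxc⟩ := mem_coneGen_iff.1 hx
      set T : Finset {v // v ∈ s} := Finset.univ.filter (fun i => 0 < g i) with hT
      have hTne : T.Nonempty := ⟨i₁, by simp [hT, hi₁]⟩
      obtain ⟨i₀, hi₀T, hmin⟩ := T.exists_min_image (fun i => c i / g i) hTne
      have hgi₀ : 0 < g i₀ := by simpa [hT] using hi₀T
      set μ : ℝ := c i₀ / g i₀ with hμ
      have hμ0 : 0 ≤ μ := div_nonneg (hc i₀) hgi₀.le
      set c' : {v // v ∈ s} → ℝ := fun i => c i - μ * g i with hc'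
      have hc'0 : ∀ i, 0 ≤ c' i := by
        intro i
        rcases lt_or_ge 0 (g i) with h | h
        · have := hmin i (by simp [hT, h])
          have : μ * g i ≤ c i := by
            rw [div_le_div_iff₀ (by positivity) h] at this
            calc μ * g i = c i₀ / g i₀ * g i := by rw [hμ]
            _ ≤ c i := by
              rw [div_mul_eq_mul_div, div_le_iff₀ (by positivity)]
              linarith
          simp [hc']; linarith
        · have : μ * g i ≤ 0 := mul_nonpos_of_nonneg_of_nonpos hμ0 h
          simp [hc']; linarith [hc i]
      have hci₀ : c' i₀ = 0 := by
        simp [hc', hμ, div_mul_cancel₀ _ (ne_of_gt hgi₀)]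
      have hxc' : x = ∑ i, c' i • (i : M) := by
        simp only [hc', sub_smul, Finset.sum_sub_distrib, mul_smul]
        rw [← Finset.smul_sum, hg0, smul_zero, sub_zero, hxc]
      -- x belongs to the cone on s.erase i₀
      have hxe : x ∈ coneGen (s.erase (i₀ : M)) := by
        refine ⟨fun v => if h : v ∈ s then (if v = (i₀ : M) then 0 else c' ⟨v, h⟩) else 0,
          fun v => ?_, ?_⟩
        · by_cases h : v ∈ s
          · by_cases h' : v = (i₀ : M) <;> simp [h, h', hc'0]
          · simp [h]
        · rw [Finset.sum_erase]
          · rw [hxc', ← Finset.sum_attach s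
              (fun v => (if h : v ∈ s then (if v = (i₀ : M) then 0 else c' ⟨v, h⟩) else 0) • v)]
            rw [Finset.univ_eq_attach]
            refine Finset.sum_congr rfl fun i _ => ?_
            by_cases h' : (i : M) = (i₀ : M)
            · have : i = i₀ := Subtype.ext h'
              simp [i.2, h', this, hci₀]
            · simp [i.2, h']
          · simp
      obtain ⟨t, hts, hli, hxt⟩ := ih (s.erase (i₀ : M)) (Finset.erase_ssubset i₀.2) x hxe
      exact ⟨t, hts.trans (Finset.erase_subset _ _), hli, hxt⟩

end Aux2

noncomputable section Aux3

open Submodule Module Set Topology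

variable {r : ℕ}

/-- The linear map sending coefficients to the corresponding combination. -/
def combMap (r : ℕ) (t : Finset (Vr r)) : ({v // v ∈ t} → ℝ) →ₗ[ℝ] Vr r where
  toFun := fun c => ∑ i, c i • (i : Vr r)
  map_add' := fun c d => by simp [add_smul, Finset.sum_add_distrib]
  map_smul' := fun a c => by simp [Finset.smul_sum, smul_smul]

lemma coneGen_eq_image (t : Finset (Vr r)) :
    coneGen t = combMap r t '' {c | ∀ i, 0 ≤ c i} := by
  ext x
  rw [mem_coneGen_iff]
  constructor
  · rintro ⟨c, hc, rfl⟩; exact ⟨c, hc, rfl⟩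
  · rintro ⟨c, hc, rfl⟩; exact ⟨c, hc, rfl⟩

lemma coneGen_isClosed_of_li {t : Finset (Vr r)}
    (hli : LinearIndependent ℝ (fun i : {v // v ∈ t} => (i : Vr r))) :
    IsClosed (coneGen t) := by
  rw [coneGen_eq_image]
  have hker : LinearMap.ker (combMap r t) = ⊥ := by
    rw [LinearMap.ker_eq_bot']
    intro c hc
    exact funext (Fintype.linearIndependent_iff.1 hli c hc)
  have hemb : Topology.IsClosedEmbedding (combMap r t) :=
    LinearMap.isClosedEmbedding_of_injective hker
  refine hemb.isClosedMap _ ?_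
  have : {c : {v // v ∈ t} → ℝ | ∀ i, 0 ≤ c i} = ⋂ i, {c | 0 ≤ c i} := by
    ext c; simp
  rw [this]
  exact isClosed_iInter fun i => isClosed_le continuous_const (continuous_apply i)

lemma coneGen_isClosed (s : Finset (Vr r)) : IsClosed (coneGen s) := by
  have : coneGen s = ⋃ t ∈ {t : Finset (Vr r) | t ⊆ s ∧
      LinearIndependent ℝ (fun i : {v // v ∈ t} => (i : Vr r))}, coneGen t := by
    apply Set.Subset.antisymm
    · intro x hx
      obtain ⟨t, hts, hli, hxt⟩ := coneGen_caratheodory s x hx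
      exact Set.mem_biUnion ⟨hts, hli⟩ hxt
    · refine Set.iUnion₂_subset fun t ht => coneGen_mono ht.1
  rw [this]
  refine Set.Finite.isClosed_biUnion ?_ fun t ht => coneGen_isClosed_of_li ht.2
  exact Set.Finite.subset (s.powerset : Finset (Finset (Vr r))).finite_toSet
    (fun t ht => Finset.mem_powerset.2 ht.1)

end Aux3

noncomputable section Aux4

open Submodule Module Set Topology Filter

variable {r : ℕ}

/-- Relative interior (w.r.t. the linear span). -/
def Relint (C : Set (Vr r)) : Set (Vr r) :=
  {x | x ∈ C ∧ ∃ ε > 0, ∀ z ∈ (span ℝ C : Set (Vr r)), dist z x < ε → z ∈ C}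

lemma Relint_subset (C : Set (Vr r)) : Relint C ⊆ C := fun _ h => h.1

lemma relint_convex {C : Set (Vr r)} (hC : Convex ℝ C) : Convex ℝ (Relint C) := by
  rintro x₁ ⟨hx₁, ε₁, hε₁, h₁⟩ x₂ ⟨hx₂, ε₂, hε₂, h₂⟩ a b ha hb hab
  refine ⟨hC hx₁ hx₂ ha hb hab, min ε₁ ε₂, lt_min hε₁ hε₂, fun z hz hd => ?_⟩
  set w := z - (a • x₁ + b • x₂) with hw
  have hxs : x₁ ∈ (span ℝ C : Set (Vr r)) := subset_span hx₁
  have hxs₂ : x₂ ∈ (span ℝ C : Set (Vr r)) := subset_span hx₂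
  have hwmem : w ∈ span ℝ C :=
    Submodule.sub_mem _ hz (Submodule.add_mem _ (Submodule.smul_mem _ _ hxs)
      (Submodule.smul_mem _ _ hxs₂))
  have hznorm : ‖w‖ < min ε₁ ε₂ := by rwa [dist_eq_norm] at hd
  have e1 : x₁ + w ∈ C := by
    refine h₁ _ (Submodule.add_mem _ hxs hwmem) ?_
    rw [dist_eq_norm]
    simpa using lt_of_lt_of_le hznorm (min_le_left _ _)
  have e2 : x₂ + w ∈ C := by
    refine h₂ _ (Submodule.add_mem _ hxs₂ hwmem) ?_
    rw [dist_eq_norm]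
    simpa using lt_of_lt_of_le hznorm (min_le_right _ _)
  have hz' : z = a • (x₁ + w) + b • (x₂ + w) := by
    have h2 : a • (x₁ + w) + b • (x₂ + w) = a • x₁ + b • x₂ + (a + b) • w := by
      rw [smul_add, smul_add, add_smul]; abel
    rw [h2, hab, one_smul, hw]; abel
  rw [hz']
  exact hC e1 e2 ha hb hab

lemma relint_segment {C : Set (Vr r)} (hC : Convex ℝ C) {p x : Vr r}
    (hp : p ∈ Relint C) (hx : x ∈ C) {t : ℝ} (ht0 : 0 ≤ t) (ht1 : t < 1) :
    (1 - t) • p + t • x ∈ Relint C := by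
  obtain ⟨hpC, ε, hε, hball⟩ := hp
  have h1t : 0 < 1 - t := by linarith
  refine ⟨hC hpC hx (by linarith) ht0 (by ring), (1 - t) * ε, by positivity,
    fun z hz hd => ?_⟩
  set w := z - ((1 - t) • p + t • x) with hw
  have hps : p ∈ (span ℝ C : Set (Vr r)) := subset_span hpC
  have hxs : x ∈ (span ℝ C : Set (Vr r)) := subset_span hx
  have hwmem : w ∈ span ℝ C :=
    Submodule.sub_mem _ hz (Submodule.add_mem _ (Submodule.smul_mem _ _ hps)
      (Submodule.smul_mem _ _ hxs))
  have hwnorm : ‖w‖ < (1 - t) * ε := by rwa [dist_eq_norm] at hd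
  have hp' : p + (1 - t)⁻¹ • w ∈ C := by
    refine hball _ (Submodule.add_mem _ hps (Submodule.smul_mem _ _ hwmem)) ?_
    rw [dist_eq_norm]
    have : ‖p + (1 - t)⁻¹ • w - p‖ = (1 - t)⁻¹ * ‖w‖ := by
      rw [add_sub_cancel_left, norm_smul, Real.norm_eq_abs, abs_of_pos (by positivity)]
    rw [this]
    rw [inv_mul_lt_iff₀ h1t]
    linarith [hwnorm]
  have hz' : z = (1 - t) • (p + (1 - t)⁻¹ • w) + t • x := by
    rw [smul_add, smul_smul, mul_inv_cancel₀ (ne_of_gt h1t), one_smul, hw]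
    abel
  rw [hz']
  exact hC hp' hx (le_of_lt h1t) ht0 (by ring)

/-- The relative interior of a finitely generated cone is nonempty. -/
lemma coneGen_relint_nonempty (s : Finset (Vr r)) : (Relint (coneGen s)).Nonempty := by
  classical
  set W : Submodule ℝ (Vr r) := span ℝ (coneGen s) with hW
  have hWs : W = span ℝ (s : Set (Vr r)) := span_coneGen s
  -- the combination map surjects onto W
  have hrange : ∀ w ∈ W, ∃ c : {v // v ∈ s} → ℝ, combMap r s c = w := by
    intro w hw
    rw [hWs] at hw
    have : w ∈ span ℝ (Set.range (fun i : {v // v ∈ s} => (i : Vr r))) := by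
      have : (s : Set (Vr r)) = Set.range (fun i : {v // v ∈ s} => (i : Vr r)) := by
        ext v; simp
      rwa [this] at hw
    obtain ⟨c, hc⟩ := (mem_span_range_iff_exists_fun ℝ).1 this
    exact ⟨c, hc⟩
  set Phi : ({v // v ∈ s} → ℝ) →ₗ[ℝ] ↥W := (combMap r s).codRestrict W
    (fun c => by
      rw [hWs]
      exact Submodule.sum_mem _ fun i _ => Submodule.smul_mem _ _ (subset_span i.2)) with hPhi
  have hsurj : Function.Surjective Phi := by
    intro w
    obtain ⟨c, hc⟩ := hrange ↑w w.2
    exact ⟨c, Subtype.ext hc⟩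
  obtain ⟨g, hg⟩ := LinearMap.exists_rightInverse_of_surjective Phi
    (LinearMap.range_eq_top.2 hsurj)
  have hgc : Continuous g := LinearMap.continuous_of_finiteDimensional g
  set g' := LinearMap.toContinuousLinearMap g with hg'
  set M : ℝ := ‖g'‖ + 1 with hM
  have hM0 : 0 < M := by positivity
  have hgb : ∀ w : ↥W, ‖g w‖ ≤ M * ‖w‖ := by
    intro w
    have h1 : ‖g' w‖ ≤ ‖g'‖ * ‖w‖ := g'.le_opNorm w
    have h2 : ‖g'‖ * ‖w‖ ≤ M * ‖w‖ := by
      apply mul_le_mul_of_nonneg_right _ (norm_nonneg _)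
      rw [hM]; linarith
    exact le_trans h1 h2
  -- the candidate interior point
  set p : Vr r := ∑ i : {v // v ∈ s}, (1 : ℝ) • (i : Vr r) with hp
  have hpmem : p ∈ coneGen s := mem_coneGen_iff.2 ⟨fun _ => 1, fun _ => zero_le_one, rfl⟩
  have hpW : p ∈ W := subset_span hpmem
  refine ⟨p, hpmem, 1 / M, by positivity, fun z hz hd => ?_⟩
  have hzW : z ∈ W := hz
  set w : ↥W := ⟨z - p, Submodule.sub_mem _ hzW hpW⟩ with hw
  set c := g w with hc
  have hPc : combMap r s c = z - p := by
    have := congrArg (fun (f : ↥W →ₗ[ℝ] ↥W) => f w) hg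
    simp only [LinearMap.comp_apply, LinearMap.id_apply] at this
    have := congrArg (Subtype.val) this
    simpa [hPhi, LinearMap.codRestrict_apply] using this
  have hcb : ∀ i, |c i| < 1 := by
    intro i
    have h1 : |c i| ≤ ‖c‖ := by
      have := norm_le_pi_norm c i
      simpa using this
    have h2 : ‖c‖ ≤ M * ‖w‖ := hgb w
    have h3 : ‖w‖ = ‖z - p‖ := rfl
    have h4 : ‖z - p‖ < 1 / M := by rwa [dist_eq_norm] at hd
    calc |c i| ≤ M * ‖z - p‖ := by rw [← h3]; exact le_trans h1 h2
    _ < M * (1 / M) := by exact mul_lt_mul_of_pos_left h4 hM0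
    _ = 1 := by field_simp
  refine mem_coneGen_iff.2 ⟨fun i => 1 + c i, fun i => by have := abs_lt.1 (hcb i); simp only []; linarith [this.1], ?_⟩
  have : ∑ i : {v // v ∈ s}, (1 + c i) • (i : Vr r) = p + combMap r s c := by
    rw [hp]
    simp only [combMap, LinearMap.coe_mk, AddHom.coe_mk]
    change _ = _ + ∑ i : {v // v ∈ s}, c i • (i : Vr r)
    rw [← Finset.sum_add_distrib]
    exact Finset.sum_congr rfl fun i _ => by rw [add_smul]
  rw [this, hPc]
  abel

end Aux4

noncomputable section Aux5

open Submodule Module Set Topology Filter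

variable {r : ℕ}

/-- If `y` is not in the relative interior of a f.g. cone, there is a supporting
functional giving a proper face through `y`. -/
lemma exists_proper_face {s : Finset (Vr r)} {y : Vr r}
    (hy : y ∈ coneGen s) (hrel : y ∉ Relint (coneGen s)) :
    ∃ m : Vr r →ₗ[ℝ] ℝ, (∀ x ∈ coneGen s, 0 ≤ m x) ∧ m y = 0 ∧
      spanDim (coneGen s ∩ {x | m x = 0}) < spanDim (coneGen s) := by
  classical
  set C : Set (Vr r) := coneGen s with hC
  set W : Submodule ℝ (Vr r) := span ℝ C with hWdef
  have hCW : C ⊆ (W : Set (Vr r)) := subset_span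
  -- the relative interior, seen inside `W`
  set S' : Set ↥W := {x : ↥W | (x : Vr r) ∈ Relint C} with hS'
  have hconv : Convex ℝ S' := by
    have := (relint_convex (coneGen_convex s)).linear_preimage (W.subtype)
    exact this
  have hopen : IsOpen S' := by
    rw [Metric.isOpen_iff]
    rintro x ⟨hxC, ε, hε, hball⟩
    refine ⟨ε, hε, fun x' hx' => ?_⟩
    have hd : dist (x' : Vr r) (x : Vr r) < ε := hx'
    have hx'C : (x' : Vr r) ∈ C := hball _ x'.2 hd
    refine ⟨hx'C, ε - dist (x' : Vr r) (x : Vr r), by simpa using hd, fun z hz hdz => ?_⟩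
    refine hball _ hz ?_
    calc dist z (x : Vr r) ≤ dist z (x' : Vr r) + dist (x' : Vr r) (x : Vr r) :=
      dist_triangle _ _ _
    _ < ε := by linarith
  have hyW : y ∈ W := hCW hy
  have hynot : (⟨y, hyW⟩ : ↥W) ∉ S' := hrel
  obtain ⟨f, hf⟩ := geometric_hahn_banach_open_point hconv hopen hynot
  -- extend `f` to the ambient space
  obtain ⟨W', hcompl⟩ := Submodule.exists_isCompl W
  set proj := Submodule.linearProjOfIsCompl W W' hcompl with hproj
  set m₀ : Vr r →ₗ[ℝ] ℝ := (f : ↥W →L[ℝ] ℝ).toLinearMap.comp proj with hm₀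
  have hm₀W : ∀ (x : Vr r) (hx : x ∈ W), m₀ x = f ⟨x, hx⟩ := by
    intro x hx
    have : proj x = ⟨x, hx⟩ := Submodule.linearProjOfIsCompl_apply_left hcompl ⟨x, hx⟩
    simp [hm₀, this]
  have hm₀rel : ∀ a ∈ Relint C, m₀ a < m₀ y := by
    intro a ha
    have haW : a ∈ W := hCW (Relint_subset _ ha)
    rw [hm₀W a haW, hm₀W y hyW]
    exact hf ⟨a, haW⟩ ha
  obtain ⟨p, hp⟩ := coneGen_relint_nonempty s
  -- every point of the cone satisfies `m₀ x ≤ m₀ y`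
  have key : ∀ x ∈ C, m₀ x ≤ m₀ y := by
    intro x hx
    have hlim : Tendsto (fun t : ℝ => (1 - t) * m₀ p + t * m₀ x) (nhdsWithin 1 (Set.Iio 1))
        (nhds (m₀ x)) := by
      have hcont : Continuous (fun t : ℝ => (1 - t) * m₀ p + t * m₀ x) := by continuity
      have := hcont.tendsto 1
      simp only [sub_self, zero_mul, one_mul, zero_add] at this
      exact this.mono_left nhdsWithin_le_nhds
    refine le_of_tendsto hlim ?_
    filter_upwards [Ico_mem_nhdsLT_of_mem (by norm_num : (1:ℝ) ∈ Set.Ioc (0:ℝ) 1)] with t ht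
    have hseg : (1 - t) • p + t • x ∈ Relint C :=
      relint_segment (coneGen_convex s) hp hx ht.1 ht.2
    have := hm₀rel _ hseg
    rw [map_add, map_smul, map_smul] at this
    simpa using le_of_lt this
  have hy0 : m₀ y = 0 := by
    have h1 : (0:ℝ) ≤ m₀ y := by simpa using key 0 (coneGen_zero_mem s)
    have h2 : m₀ ((2:ℝ) • y) ≤ m₀ y := key _ (coneGen_smul (by norm_num) hy)
    rw [map_smul] at h2
    simp only [smul_eq_mul] at h2
    linarith
  refine ⟨-m₀, fun x hx => by simpa using key x hx |>.trans_eq hy0, by simp [hy0], ?_⟩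
  -- dimension drop
  have hple : span ℝ (C ∩ {x | (-m₀) x = 0}) ≤ W := by
    rw [hWdef]
    exact span_mono inter_subset_left
  have hpne : p ∉ span ℝ (C ∩ {x | (-m₀) x = 0}) := by
    intro hpmem
    have hker : span ℝ (C ∩ {x | (-m₀) x = 0}) ≤ LinearMap.ker m₀ := by
      rw [span_le]
      rintro x ⟨-, hx⟩
      simp only [LinearMap.neg_apply, neg_eq_zero, Set.mem_setOf_eq] at hx
      exact hx
    have hmp : m₀ p = 0 := hker hpmem
    have hppos := hm₀rel p hp
    rw [hmp, hy0] at hppos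
    exact lt_irrefl 0 hppos
  have hlt : span ℝ (C ∩ {x | (-m₀) x = 0}) < W :=
    lt_of_le_of_ne hple (fun h => hpne (h ▸ (subset_span (Relint_subset _ hp) : p ∈ span ℝ C)))
  exact Submodule.finrank_lt_finrank_of_lt hlt

/-- Every point of a cone of a fan lies in the relative interior of some cone of the fan
contained in it. -/
lemma exists_relint_face {N : AddSubgroup (Vr r)} {F : Set (Set (Vr r))} (hfan : IsFan N F) :
    ∀ γ ∈ F, ∀ y ∈ γ, ∃ δ ∈ F, δ ⊆ γ ∧ y ∈ Relint δ := by
  have main : ∀ n : ℕ, ∀ γ ∈ F, spanDim γ ≤ n → ∀ y ∈ γ, ∃ δ ∈ F, δ ⊆ γ ∧ y ∈ Relint δ := by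
    intro n
    induction n with
    | zero =>
      intro γ hγ hdim y hy
      have hsp : span ℝ γ = ⊥ := Submodule.finrank_eq_zero.1 (Nat.le_zero.1 hdim)
      refine ⟨γ, hγ, le_refl _, hy, 1, one_pos, fun z hz _ => ?_⟩
      rw [hsp] at hz
      have : z = 0 := hz
      have hy0 : y = 0 := by
        have : y ∈ (span ℝ γ : Set (Vr r)) := subset_span hy
        rw [hsp] at this
        exact this
      rw [this, ← hy0]
      exact hy
    | succ n ih =>
      intro γ hγ hdim y hy
      by_cases hrel : y ∈ Relint γ
      · exact ⟨γ, hγ, le_refl _, hrel⟩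
      · obtain ⟨s, -, hs, -⟩ := hfan.cones γ hγ
        subst hs
        obtain ⟨m, hm0, hmy, hdrop⟩ := exists_proper_face hy hrel
        set δ₀ : Set (Vr r) := coneGen s ∩ {x | m x = 0} with hδ₀
        have hδ₀F : δ₀ ∈ F := hfan.faces _ hγ δ₀ ⟨m, hm0, rfl⟩
        have hδ₀dim : spanDim δ₀ ≤ n := by
          have := lt_of_lt_of_le hdrop hdim
          omega
        obtain ⟨δ, hδF, hδsub, hδrel⟩ := ih δ₀ hδ₀F hδ₀dim y ⟨hy, hmy⟩
        exact ⟨δ, hδF, hδsub.trans inter_subset_left, hδrel⟩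
  intro γ hγ y hy
  exact main (spanDim γ) γ hγ (le_refl _) y hy

end Aux5

noncomputable section Aux6

open Submodule Module Set Topology Filter

variable {r : ℕ}

lemma finrank_span_singleton_le' (x : Vr r) : finrank ℝ (span ℝ ({x} : Set (Vr r))) ≤ 1 := by
  by_cases hx : x = 0
  · subst hx
    rw [span_zero_singleton]
    simp
  · rw [finrank_span_singleton hx]

/-- Density of the complement of finitely many proper subspaces near any point of `H`. -/
lemma exists_near_avoiding (H : Submodule ℝ (Vr r)) (G : Finset (Submodule ℝ (Vr r)))
    (hG : ∀ W ∈ G, W < H) :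
    ∀ y ∈ H, ∀ ε > 0, ∃ z, z ∈ H ∧ (∀ W ∈ G, z ∉ W) ∧ dist z y < ε := by
  classical
  have hdense : ∀ W ∈ G, Dense {x : ↥H | (x : Vr r) ∉ W} := by
    intro W hW
    rw [Metric.dense_iff]
    intro x ρ hρ
    obtain ⟨v, hvH, hvW⟩ := SetLike.exists_of_lt (hG W hW)
    have hv0 : v ≠ 0 := fun h => hvW (h ▸ W.zero_mem)
    by_cases hx : (x : Vr r) ∈ W
    · set δ : ℝ := ρ / (2 * ‖v‖) with hδ
      have hnv : 0 < ‖v‖ := norm_pos_iff.2 hv0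
      have hδ0 : 0 < δ := by positivity
      refine ⟨⟨(x : Vr r) + δ • v, H.add_mem x.2 (H.smul_mem _ hvH)⟩, ?_, ?_⟩
      · rw [Metric.mem_ball, Subtype.dist_eq]
        simp only [dist_eq_norm, add_sub_cancel_left]
        rw [norm_smul, Real.norm_eq_abs, abs_of_pos hδ0, hδ]
        rw [div_mul_eq_mul_div]
        rw [div_lt_iff₀ (by positivity)]
        nlinarith
      · intro hmem
        have : δ • v ∈ W := by
          have h2 : ((x : Vr r) + δ • v) - (x : Vr r) ∈ W := W.sub_mem hmem hx
          simpa using h2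
        exact hvW ((W.smul_mem_iff (ne_of_gt hδ0)).1 this)
    · exact ⟨x, Metric.mem_ball_self hρ, hx⟩
  have hopen : ∀ W ∈ G, IsOpen {x : ↥H | (x : Vr r) ∉ W} := by
    intro W hW
    have : {x : ↥H | (x : Vr r) ∉ W} = ((↑) : ↥H → Vr r) ⁻¹' ((W : Set (Vr r))ᶜ) := rfl
    rw [this]
    exact (W.closed_of_finiteDimensional.isOpen_compl).preimage continuous_subtype_val
  have hD : Dense (⋂ W ∈ G, {x : ↥H | (x : Vr r) ∉ W}) := by
    induction G using Finset.induction with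
    | empty => simpa using dense_univ
    | insert a G' hnot ih =>
      rw [Finset.set_biInter_insert]
      exact Dense.inter_of_isOpen_left
        (hdense a (Finset.mem_insert_self a G'))
        (ih (fun W hW => hG W (Finset.mem_insert_of_mem hW))
          (fun W hW => hdense W (Finset.mem_insert_of_mem hW))
          (fun W hW => hopen W (Finset.mem_insert_of_mem hW)))
        (hopen a (Finset.mem_insert_self a G'))
  intro y hy ε hε
  obtain ⟨z, hzball, hzD⟩ := Metric.dense_iff.1 hD ⟨y, hy⟩ ε hε
  simp only [Set.mem_iInter, Set.mem_setOf_eq] at hzD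
  refine ⟨z, z.2, hzD, ?_⟩
  rw [Metric.mem_ball, Subtype.dist_eq] at hzball
  exact hzball

lemma exists_avoiding (H : Submodule ℝ (Vr r)) (G : Finset (Submodule ℝ (Vr r)))
    (hG : ∀ W ∈ G, W < H) : ∃ z ∈ (H : Set (Vr r)), ∀ W ∈ G, z ∉ W := by
  obtain ⟨z, h1, h2, -⟩ := exists_near_avoiding H G hG 0 H.zero_mem 1 one_pos
  exact ⟨z, h1, h2⟩

/-- The complement in `H` of finitely many subspaces of codimension ≥ 2 is preconnected. -/
lemma preconn_compl (H : Submodule ℝ (Vr r)) (G : Finset (Submodule ℝ (Vr r)))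
    (hle : ∀ W ∈ G, W ≤ H) (hG2 : ∀ W ∈ G, finrank ℝ W + 1 < finrank ℝ H) :
    IsPreconnected ((H : Set (Vr r)) \ ⋃ W ∈ G, (W : Set (Vr r))) := by
  classical
  apply isPreconnected_of_forall_pair
  intro x hx y hy
  simp only [Set.mem_diff, Set.mem_iUnion, not_exists] at hx hy
  set G' : Finset (Submodule ℝ (Vr r)) :=
    G.image (fun W => W ⊔ span ℝ ({x} : Set (Vr r))) ∪
    G.image (fun W => W ⊔ span ℝ ({y} : Set (Vr r))) with hG'
  have hG'lt : ∀ Z ∈ G', Z < H := by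
    intro Z hZ
    rw [hG', Finset.mem_union] at hZ
    have key : ∀ (u : Vr r), u ∈ H → ∀ W ∈ G, W ⊔ span ℝ ({u} : Set (Vr r)) < H := by
      intro u hu W hW
      have hZle : W ⊔ span ℝ ({u} : Set (Vr r)) ≤ H :=
        sup_le (hle W hW) ((span_le).2 (by simpa using hu))
      refine lt_of_le_of_ne hZle (fun heq => ?_)
      have h1 : finrank ℝ (W ⊔ span ℝ ({u} : Set (Vr r)) : Submodule ℝ (Vr r)) ≤
          finrank ℝ W + 1 := by
        refine le_trans (Submodule.finrank_add_le_finrank_add_finrank _ _) ?_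
        have := finrank_span_singleton_le' u
        omega
      rw [heq] at h1
      have := hG2 W hW
      omega
    rcases hZ with hZ | hZ
    · obtain ⟨W, hW, rfl⟩ := Finset.mem_image.1 hZ
      exact key x hx.1 W hW
    · obtain ⟨W, hW, rfl⟩ := Finset.mem_image.1 hZ
      exact key y hy.1 W hW
  obtain ⟨z, hzH, hzG'⟩ := exists_avoiding H G' hG'lt
  -- the broken segment x – z – y
  have hseg : ∀ (u : Vr r), u ∈ H → (∀ W ∈ G, u ∉ W) →
      (∀ W ∈ G, W ⊔ span ℝ ({u} : Set (Vr r)) ∈ G') →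
      segment ℝ u z ⊆ (H : Set (Vr r)) \ ⋃ W ∈ G, (W : Set (Vr r)) := by
    intro u huH huG hmem w hw
    obtain ⟨a, b, ha, hb, hab, rfl⟩ := hw
    constructor
    · exact H.add_mem (H.smul_mem _ huH) (H.smul_mem _ hzH)
    · simp only [Set.mem_iUnion, not_exists]
      intro W hW hwW
      have hZ : W ⊔ span ℝ ({u} : Set (Vr r)) ∈ G' := hmem W hW
      have huZ : u ∈ W ⊔ span ℝ ({u} : Set (Vr r)) := by
        have h0 : u ∈ span ℝ ({u} : Set (Vr r)) := subset_span (Set.mem_singleton u)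
        exact (le_sup_right : span ℝ ({u} : Set (Vr r)) ≤ W ⊔ span ℝ ({u} : Set (Vr r))) h0
      have hwZ : a • u + b • z ∈ W ⊔ span ℝ ({u} : Set (Vr r)) :=
        (le_sup_left : W ≤ W ⊔ span ℝ ({u} : Set (Vr r))) hwW
      have hbz : b • z ∈ W ⊔ span ℝ ({u} : Set (Vr r)) := by
        have := Submodule.sub_mem _ hwZ (Submodule.smul_mem _ a huZ)
        simpa using this
      by_cases hb0 : b = 0
      · subst hb0
        have hab' : a = 1 := by linarith
        subst hab'
        simp only [one_smul, zero_smul, add_zero] at hwW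
        exact huG W hW hwW
      · have : z ∈ W ⊔ span ℝ ({u} : Set (Vr r)) :=
          (Submodule.smul_mem_iff _ hb0).1 hbz
        exact hzG' _ hZ this
  refine ⟨segment ℝ x z ∪ segment ℝ z y, ?_, ?_, ?_, ?_⟩
  · apply Set.union_subset
    · exact hseg x hx.1 hx.2 (fun W hW => Finset.mem_union_left _
        (Finset.mem_image_of_mem _ hW))
    · intro w hw
      rw [segment_symm] at hw
      exact hseg y hy.1 hy.2 (fun W hW => Finset.mem_union_right _
        (Finset.mem_image_of_mem _ hW)) hw
  · exact Or.inl (left_mem_segment ℝ x z)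
  · exact Or.inr (right_mem_segment ℝ z y)
  · exact IsPreconnected.union z (right_mem_segment ℝ x z) (left_mem_segment ℝ z y)
      (convex_segment x z).isPreconnected (convex_segment z y).isPreconnected

end Aux6

noncomputable section Aux7

open Submodule Module Set Topology Filter

variable {r : ℕ}

set_option maxHeartbeats 1000000 in
/-- The key local step: near a relative-interior point of an `(r-2)`-dimensional face `δ` of an
`(r-1)`-dimensional cone `η ⊆ H`, central symmetry of the star of `δ` provides full coverage of a
neighbourhood in `H` by `(r-1)`-dimensional cones of the fan contained in `H`. -/
lemma star_case {N : AddSubgroup (Vr r)} {F : Set (Set (Vr r))} (hfan : IsFan N F)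
    (hstar : ∀ δ ∈ F, spanDim δ = r - 2 → CSymm (starAt F δ (Submodule.span ℝ δ)))
    (hr : 2 ≤ r) {H : Submodule ℝ (Vr r)} (hHrank : finrank ℝ H = r - 1)
    {η δ : Set (Vr r)} (hηF : η ∈ F) (hηH : η ⊆ (H : Set (Vr r))) (hηdim : spanDim η = r - 1)
    (hδF : δ ∈ F) (hδη : δ ⊆ η) (hδdim : spanDim δ = r - 2)
    {y : Vr r} (hy : y ∈ Relint δ) :
    ∃ ε > 0, ∀ z ∈ (H : Set (Vr r)), dist z y < ε →
      ∃ η' ∈ F, η' ⊆ (H : Set (Vr r)) ∧ spanDim η' = r - 1 ∧ z ∈ η' := by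
  classical
  set E : Submodule ℝ (Vr r) := Submodule.span ℝ δ with hE
  have hEH : E ≤ H := span_le.2 (fun x hx => hηH (hδη hx))
  have hEdim : finrank ℝ E = r - 2 := hδdim
  -- a vector of η outside E
  have hηE : ¬ η ⊆ (E : Set (Vr r)) := by
    intro hsub
    have : span ℝ η ≤ E := span_le.2 hsub
    have h1 : spanDim η ≤ finrank ℝ E := Submodule.finrank_mono this
    rw [hEdim, hηdim] at h1
    omega
  obtain ⟨u₀, hu₀η, hu₀E⟩ := Set.not_subset.1 hηE
  have hu₀H : u₀ ∈ H := hηH hu₀η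
  -- central symmetry of the star
  have hsym := hstar δ hδF hδdim
  have hmem : E.mkQ '' η ∈ starAt F δ E := ⟨η, hηF, hδη, rfl⟩
  obtain ⟨η', hη'F, hδη', heq⟩ := hsym _ hmem
  -- a vector of η' mapping to the negative of u₀
  have hu₀'mem : -(E.mkQ u₀) ∈ E.mkQ '' η' := by
    rw [← heq]
    exact Set.neg_mem_neg.2 ⟨u₀, hu₀η, rfl⟩
  obtain ⟨u₀', hu₀'η', hmk⟩ := hu₀'mem
  have hu₀E' : E.mkQ u₀ ≠ 0 := by
    intro h
    exact hu₀E ((Submodule.Quotient.mk_eq_zero E).1 (by simpa [Submodule.mkQ_apply] using h))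
  have hu₀'E : u₀' ∉ (E : Set (Vr r)) := by
    intro h
    have : E.mkQ u₀' = 0 := (Submodule.Quotient.mk_eq_zero E).2 h
    rw [hmk] at this
    exact hu₀E' (neg_eq_zero.1 this)
  -- η' is contained in H
  have hη'H : η' ⊆ (H : Set (Vr r)) := by
    intro a ha
    have : E.mkQ a ∈ E.mkQ '' η' := ⟨a, ha, rfl⟩
    rw [← heq] at this
    obtain ⟨b, hbη, hb⟩ := (Set.mem_neg).1 this
    have hab : a + b ∈ E := by
      rw [← Submodule.Quotient.mk_eq_zero E]
      have : E.mkQ (a + b) = E.mkQ a + E.mkQ b := map_add _ _ _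
      have hb' : E.mkQ b = -(E.mkQ a) := by
        rw [hb]
      simp only [Submodule.mkQ_apply] at this hb' ⊢
      rw [this, hb', add_neg_cancel]
    have hbH : b ∈ H := hηH hbη
    have : a = (a + b) - b := by abel
    rw [this]
    exact H.sub_mem (hEH hab) hbH
  -- η' is (r-1)-dimensional
  have hη'dim : spanDim η' = r - 1 := by
    have hle : span ℝ η' ≤ H := span_le.2 hη'H
    have h1 : spanDim η' ≤ r - 1 := by
      have := Submodule.finrank_mono hle
      rwa [hHrank] at this
    have h2 : E < span ℝ η' := by
      refine lt_of_le_of_ne (span_mono hδη') (fun h => ?_)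
      exact hu₀'E (h ▸ (subset_span hu₀'η' : u₀' ∈ span ℝ η'))
    have h3 := Submodule.finrank_lt_finrank_of_lt h2
    rw [hEdim] at h3
    unfold spanDim at h1 ⊢
    omega
  -- a linear functional cutting out E inside H
  have hgex : ∃ g : Module.Dual ℝ (Vr r ⧸ E), g (E.mkQ u₀) ≠ 0 := by
    by_contra h
    push_neg at h
    exact hu₀E' ((Module.forall_dual_apply_eq_zero_iff ℝ _).1 h)
  obtain ⟨g, hg⟩ := hgex
  set φ : Vr r →ₗ[ℝ] ℝ := (g (E.mkQ u₀))⁻¹ • (g ∘ₗ E.mkQ) with hφ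
  have hφu₀ : φ u₀ = 1 := by
    simp only [hφ, LinearMap.smul_apply, LinearMap.comp_apply, smul_eq_mul]
    exact inv_mul_cancel₀ hg
  have hφE : ∀ e ∈ E, φ e = 0 := by
    intro e he
    have : E.mkQ e = 0 := (Submodule.Quotient.mk_eq_zero E).2 he
    simp [hφ, this]
  have hφu₀' : φ u₀' = -1 := by
    have h0 : E.mkQ u₀' = -(E.mkQ u₀) := hmk
    simp only [hφ, LinearMap.smul_apply, LinearMap.comp_apply, smul_eq_mul, h0, map_neg,
      mul_neg]
    rw [inv_mul_cancel₀ hg]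
  -- the kernel of φ in H is exactly E
  have hkerH : ∀ z ∈ H, φ z = 0 → z ∈ E := by
    intro z hzH hz0
    set K : Submodule ℝ (Vr r) := LinearMap.ker φ ⊓ H with hK
    have hEK : E ≤ K := le_inf (fun e he => by simpa [LinearMap.mem_ker] using hφE e he) hEH
    have hKH : K < H := by
      refine lt_of_le_of_ne inf_le_right (fun h => ?_)
      have : u₀ ∈ K := h ▸ hu₀H
      have : φ u₀ = 0 := (Submodule.mem_inf.1 this).1
      rw [hφu₀] at this
      norm_num at this
    have hKdim : finrank ℝ K < r - 1 := by
      have := Submodule.finrank_lt_finrank_of_lt hKH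
      rwa [hHrank] at this
    have hKE : K = E := by
      refine (Submodule.eq_of_le_of_finrank_le hEK ?_).symm
      rw [hEdim]
      omega
    rw [← hKE]
    exact Submodule.mem_inf.2 ⟨by simpa [LinearMap.mem_ker] using hz0, hzH⟩
  -- continuity bound for φ
  set φ' := LinearMap.toContinuousLinearMap φ with hφ'
  set B : ℝ := ‖φ'‖ + 1 with hB
  have hB0 : 0 < B := by positivity
  have hφbound : ∀ v : Vr r, |φ v| ≤ B * ‖v‖ := by
    intro v
    have h1 : ‖φ' v‖ ≤ ‖φ'‖ * ‖v‖ := φ'.le_opNorm v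
    have h2 : ‖φ'‖ * ‖v‖ ≤ B * ‖v‖ :=
      mul_le_mul_of_nonneg_right (by rw [hB]; linarith) (norm_nonneg v)
    calc |φ v| = ‖φ' v‖ := by rw [Real.norm_eq_abs]; rfl
    _ ≤ B * ‖v‖ := le_trans h1 h2
  clear_value φ' B
  -- the Relint ball for δ
  obtain ⟨hyδ, ε₀, hε₀, hball⟩ := hy
  have hφy : φ y = 0 := hφE y (subset_span hyδ)
  -- cones are closed under addition and nonneg scaling
  obtain ⟨sη, -, hsη, -⟩ := hfan.cones η hηF
  obtain ⟨sη', -, hsη', -⟩ := hfan.cones η' hη'F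
  -- the final ε
  set D : ℝ := 1 + B * (‖u₀‖ + ‖u₀'‖ + 1) with hD
  have hD1 : 1 ≤ D := by
    have h0 : (0:ℝ) ≤ ‖u₀‖ + ‖u₀'‖ + 1 := by positivity
    have h := mul_nonneg hB0.le h0
    rw [hD]
    linarith
  have hD0 : 0 < D := by linarith
  clear_value D
  refine ⟨ε₀ / D, by positivity, fun z hzH hdz => ?_⟩
  set a : ℝ := φ z with ha
  clear_value a
  have hab : |a| ≤ B * ‖z - y‖ := by
    have h5 : a = φ (z - y) := by rw [map_sub, hφy, sub_zero]; exact ha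
    rw [h5]
    exact hφbound _
  have hzy : ‖z - y‖ < ε₀ / D := by rwa [dist_eq_norm] at hdz
  rcases le_or_gt 0 a with ha0 | ha0
  · -- positive side: z lands in η
    set e : Vr r := z - a • u₀ with he
    clear_value e
    have heH : e ∈ H := by rw [he]; exact H.sub_mem hzH (H.smul_mem _ hu₀H)
    have heφ : φ e = 0 := by
      simp [he, map_sub, map_smul, hφu₀, ha]
    have heE : e ∈ E := hkerH e heH heφ
    have heδ : e ∈ δ := by
      refine hball e heE ?_
      rw [dist_eq_norm]
      have h1 : ‖e - y‖ ≤ ‖z - y‖ + |a| * ‖u₀‖ := by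
        calc ‖e - y‖ = ‖(z - y) - a • u₀‖ := by rw [he]; congr 1; abel
        _ ≤ ‖z - y‖ + ‖a • u₀‖ := norm_sub_le _ _
        _ = ‖z - y‖ + |a| * ‖u₀‖ := by rw [norm_smul, Real.norm_eq_abs]
      have h2 : ‖z - y‖ + |a| * ‖u₀‖ ≤ ‖z - y‖ * D := by
        have hmul : |a| * ‖u₀‖ ≤ B * ‖z - y‖ * ‖u₀‖ :=
          mul_le_mul_of_nonneg_right hab (norm_nonneg u₀)
        have hD2 : 1 + B * ‖u₀‖ ≤ D := by
          have hn2 : 0 ≤ B * ‖u₀‖ := mul_nonneg hB0.le (by positivity)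
          have hn3 : 0 ≤ B * ‖u₀'‖ := mul_nonneg hB0.le (by positivity)
          have hexp0 : B * (‖u₀‖ + ‖u₀'‖ + 1) = B * ‖u₀‖ + B * ‖u₀'‖ + B := by ring
          rw [hD, hexp0]
          linarith
        have hmul2 : ‖z - y‖ * (1 + B * ‖u₀‖) ≤ ‖z - y‖ * D :=
          mul_le_mul_of_nonneg_left hD2 (norm_nonneg _)
        have hexp : ‖z - y‖ * (1 + B * ‖u₀‖) = ‖z - y‖ + B * ‖z - y‖ * ‖u₀‖ := by ring
        linarith
      have h3 : ‖z - y‖ * D < ε₀ := by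
        have h4 : ‖z - y‖ * D < (ε₀ / D) * D := mul_lt_mul_of_pos_right hzy hD0
        rwa [div_mul_cancel₀ _ (ne_of_gt hD0)] at h4
      linarith
    have hz' : z = e + a • u₀ := by rw [he]; abel
    refine ⟨η, hηF, hηH, hηdim, ?_⟩
    rw [hz', hsη]
    exact coneGen_add (hsη ▸ hδη heδ) (coneGen_smul ha0 (hsη ▸ hu₀η))
  · -- negative side: z lands in η'
    set e : Vr r := z + a • u₀' with he
    clear_value e
    have hu₀'H : u₀' ∈ H := hη'H hu₀'η'
    have heH : e ∈ H := by rw [he]; exact H.add_mem hzH (H.smul_mem _ hu₀'H)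
    have heφ : φ e = 0 := by
      simp [he, map_add, map_smul, hφu₀', ha]
    have heE : e ∈ E := hkerH e heH heφ
    have heδ : e ∈ δ := by
      refine hball e heE ?_
      rw [dist_eq_norm]
      have h1 : ‖e - y‖ ≤ ‖z - y‖ + |a| * ‖u₀'‖ := by
        calc ‖e - y‖ = ‖(z - y) + a • u₀'‖ := by rw [he]; congr 1; abel
        _ ≤ ‖z - y‖ + ‖a • u₀'‖ := norm_add_le _ _
        _ = ‖z - y‖ + |a| * ‖u₀'‖ := by rw [norm_smul, Real.norm_eq_abs]
      have h2 : ‖z - y‖ + |a| * ‖u₀'‖ ≤ ‖z - y‖ * D := by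
        have hmul : |a| * ‖u₀'‖ ≤ B * ‖z - y‖ * ‖u₀'‖ :=
          mul_le_mul_of_nonneg_right hab (norm_nonneg u₀')
        have hD2 : 1 + B * ‖u₀'‖ ≤ D := by
          have hn2 : 0 ≤ B * ‖u₀‖ := mul_nonneg hB0.le (by positivity)
          have hn3 : 0 ≤ B * ‖u₀'‖ := mul_nonneg hB0.le (by positivity)
          have hexp0 : B * (‖u₀‖ + ‖u₀'‖ + 1) = B * ‖u₀‖ + B * ‖u₀'‖ + B := by ring
          rw [hD, hexp0]
          linarith
        have hmul2 : ‖z - y‖ * (1 + B * ‖u₀'‖) ≤ ‖z - y‖ * D :=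
          mul_le_mul_of_nonneg_left hD2 (norm_nonneg _)
        have hexp : ‖z - y‖ * (1 + B * ‖u₀'‖) = ‖z - y‖ + B * ‖z - y‖ * ‖u₀'‖ := by ring
        linarith
      have h3 : ‖z - y‖ * D < ε₀ := by
        have h4 : ‖z - y‖ * D < (ε₀ / D) * D := mul_lt_mul_of_pos_right hzy hD0
        rwa [div_mul_cancel₀ _ (ne_of_gt hD0)] at h4
      linarith
    have hz' : z = e + (-a) • u₀' := by rw [he, neg_smul]; abel
    refine ⟨η', hη'F, hη'H, hη'dim, ?_⟩
    rw [hz', hsη']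
    exact coneGen_add (hsη' ▸ hδη' heδ) (coneGen_smul (by linarith) (hsη' ▸ hu₀'η'))

end Aux7

/-- if all stars of `(r-2)`-dimensional cones of a complete fan are
centrally symmetric, then the fan is strongly symmetric: the span of every
`(r-1)`-dimensional cone is contained in the support of `Σ(r-1)`. -/
theorem stmt6 {r : ℕ} (N : AddSubgroup (Vr r)) (F : Set (Set (Vr r)))
    (hN : IsLattice N) (hfan : IsFan N F) (hcomp : FanComplete F)
    (hstar : ∀ δ ∈ F, spanDim δ = r - 2 → CSymm (starAt F δ (Submodule.span ℝ δ))) :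
    ∀ τ ∈ F, spanDim τ = r - 1 →
      (↑(Submodule.span ℝ τ) : Set (Vr r)) ⊆ ⋃₀ {η ∈ F | spanDim η = r - 1} := by
  classical
  intro τ hτ hdim
  obtain ⟨sτ, -, hsτ, -⟩ := hfan.cones τ hτ
  by_cases hr2 : r < 2
  · -- trivial low-dimensional case
    have h0 : r - 1 = 0 := by omega
    have hsp : Submodule.span ℝ τ = ⊥ := by
      refine Submodule.finrank_eq_zero.1 ?_
      rw [← h0]; exact hdim
    intro x hx
    rw [hsp] at hx
    have hx0 : x = 0 := hx
    refine ⟨τ, ⟨hτ, hdim⟩, ?_⟩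
    rw [hx0, hsτ]
    exact coneGen_zero_mem sτ
  push_neg at hr2
  set H : Submodule ℝ (Vr r) := Submodule.span ℝ τ with hH
  have hHrank : Module.finrank ℝ H = r - 1 := hdim
  -- the family of (r-1)-dimensional cones inside H
  set T : Set (Set (Vr r)) := {η | η ∈ F ∧ spanDim η = r - 1 ∧ η ⊆ (H : Set (Vr r))} with hT
  set U : Set (Vr r) := ⋃ η ∈ T, η with hU
  have hτT : τ ∈ T := ⟨hτ, hdim, Submodule.subset_span⟩
  have hUclosed : IsClosed U := by
    refine Set.Finite.isClosed_biUnion (hfan.finite.subset (fun η hη => hη.1)) ?_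
    intro η hη
    obtain ⟨s, -, hs, -⟩ := hfan.cones η hη.1
    rw [hs]; exact coneGen_isClosed s
  have hUsub : U ⊆ ⋃₀ {η ∈ F | spanDim η = r - 1} := by
    intro x hx
    obtain ⟨η, hη, hxη⟩ := Set.mem_iUnion₂.1 hx
    exact ⟨η, ⟨hη.1, hη.2.1⟩, hxη⟩
  -- the low-dimensional bad subspaces
  set Flow : Set (Set (Vr r)) := {γ | γ ∈ F ∧ γ ⊆ (H : Set (Vr r)) ∧ spanDim γ < r - 2}
    with hFlow
  have hFlowfin : Flow.Finite := hfan.finite.subset (fun γ hγ => hγ.1)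
  set G : Finset (Submodule ℝ (Vr r)) :=
    (hFlowfin.image (fun γ => Submodule.span ℝ γ)).toFinset with hG
  have hGmem : ∀ W ∈ G, ∃ γ ∈ Flow, W = Submodule.span ℝ γ := by
    intro W hW
    rw [hG, Set.Finite.mem_toFinset] at hW
    obtain ⟨γ, hγ, rfl⟩ := hW
    exact ⟨γ, hγ, rfl⟩
  have hGle : ∀ W ∈ G, W ≤ H := by
    intro W hW
    obtain ⟨γ, hγ, rfl⟩ := hGmem W hW
    exact Submodule.span_le.2 hγ.2.1
  have hGdim : ∀ W ∈ G, Module.finrank ℝ W < r - 2 := by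
    intro W hW
    obtain ⟨γ, hγ, rfl⟩ := hGmem W hW
    exact hγ.2.2
  have hGlt : ∀ W ∈ G, W < H := by
    intro W hW
    refine lt_of_le_of_ne (hGle W hW) (fun h => ?_)
    have := hGdim W hW
    rw [h, hHrank] at this
    omega
  -- the good region P
  set P : Set (Vr r) := (H : Set (Vr r)) \ ⋃ W ∈ G, (W : Set (Vr r)) with hP
  have hPH : P ⊆ (H : Set (Vr r)) := Set.diff_subset
  -- Key openness property of U at points of P
  have hopenU : ∀ y ∈ U, y ∈ P → ∃ ε > 0, ∀ z ∈ (H : Set (Vr r)), dist z y < ε → z ∈ U := by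
    intro y hyU hyP
    obtain ⟨η, hηT, hyη⟩ := Set.mem_iUnion₂.1 hyU
    obtain ⟨δ, hδF, hδη, hyrel⟩ := exists_relint_face hfan η hηT.1 y hyη
    have hδH : δ ⊆ (H : Set (Vr r)) := hδη.trans hηT.2.2
    have hδdim_le : spanDim δ ≤ r - 1 := by
      have h1 : Submodule.span ℝ δ ≤ H := Submodule.span_le.2 hδH
      have := Submodule.finrank_mono h1
      rwa [hHrank] at this
    rcases lt_trichotomy (spanDim δ) (r - 2) with hc | hc | hc
    · -- low-dimensional: contradiction with y ∈ P
      exfalso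
      have hδFlow : δ ∈ Flow := ⟨hδF, hδH, hc⟩
      have hWG : Submodule.span ℝ δ ∈ G := by
        rw [hG, Set.Finite.mem_toFinset]
        exact ⟨δ, hδFlow, rfl⟩
      have hyW : y ∈ (Submodule.span ℝ δ : Set (Vr r)) :=
        Submodule.subset_span (Relint_subset _ hyrel)
      exact hyP.2 (Set.mem_biUnion hWG hyW)
    · -- the star-symmetry case
      obtain ⟨ε, hε, hcov⟩ := star_case hfan hstar hr2 hHrank hηT.1 hηT.2.2 hηT.2.1
        hδF hδη hc hyrel
      refine ⟨ε, hε, fun z hzH hdz => ?_⟩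
      obtain ⟨η', hη'F, hη'H, hη'dim, hzη'⟩ := hcov z hzH hdz
      exact Set.mem_biUnion (⟨hη'F, hη'dim, hη'H⟩ : η' ∈ T) hzη'
    · -- full-dimensional: δ spans H, relint ball works directly
      have hδdim : spanDim δ = r - 1 := by omega
      have hsp : Submodule.span ℝ δ = H := by
        refine Submodule.eq_of_le_of_finrank_le (Submodule.span_le.2 hδH) ?_
        rw [hHrank]
        exact le_of_eq hδdim.symm
      obtain ⟨hyδ, ε, hε, hball⟩ := hyrel
      refine ⟨ε, hε, fun z hzH hdz => ?_⟩
      have hzδ : z ∈ δ := hball z (by rw [hsp]; exact hzH) hdz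
      exact Set.mem_biUnion hηT (hδη hzδ)
  -- P is preconnected
  have hPconn : IsPreconnected P :=
    preconn_compl H G hGle (fun W hW => by have := hGdim W hW; rw [hHrank]; omega)
  -- choose radii and build an open set witnessing relative openness of U ∩ P
  have hchoice : ∀ y : Vr r, ∃ ε : ℝ, 0 < ε ∧
      (y ∈ U → y ∈ P → ∀ z ∈ (H : Set (Vr r)), dist z y < ε → z ∈ U) := by
    intro y
    by_cases h : y ∈ U ∧ y ∈ P
    · obtain ⟨ε, hε, h2⟩ := hopenU y h.1 h.2
      exact ⟨ε, hε, fun _ _ => h2⟩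
    · exact ⟨1, one_pos, fun hU hP => absurd ⟨hU, hP⟩ h⟩
  choose εf hεf using hchoice
  set O : Set (Vr r) := ⋃ y ∈ U ∩ P, Metric.ball y (εf y) with hO
  have hOopen : IsOpen O := isOpen_biUnion (fun _ _ => Metric.isOpen_ball)
  have hUPO : U ∩ P ⊆ O := fun y hy =>
    Set.mem_biUnion hy (Metric.mem_ball_self (hεf y).1)
  have hOHU : ∀ z ∈ O, z ∈ (H : Set (Vr r)) → z ∈ U := by
    intro z hz hzH
    obtain ⟨y, hy, hzball⟩ := Set.mem_iUnion₂.1 hz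
    exact (hεf y).2 hy.1 hy.2 z hzH (Metric.mem_ball.1 hzball)
  -- a point of U inside P
  have hUPne : (P ∩ O).Nonempty := by
    obtain ⟨p, hpτ', hε₀all⟩ := coneGen_relint_nonempty sτ
    obtain ⟨ε₀, hε₀, hballτ⟩ := hε₀all
    have hpτ : p ∈ τ := by rw [hsτ]; exact hpτ'
    have hpH : p ∈ H := Submodule.subset_span hpτ
    obtain ⟨z₀, hz₀H, hz₀G, hz₀d⟩ := exists_near_avoiding H G hGlt p hpH ε₀ hε₀
    have hz₀τ : z₀ ∈ τ := by
      rw [hsτ]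
      refine hballτ z₀ ?_ hz₀d
      rw [← hsτ]
      exact hz₀H
    have hz₀P : z₀ ∈ P := by
      refine ⟨hz₀H, fun hmem => ?_⟩
      obtain ⟨W, hW, hz₀W⟩ := Set.mem_iUnion₂.1 hmem
      exact hz₀G W hW hz₀W
    have hz₀U : z₀ ∈ U := Set.mem_biUnion hτT hz₀τ
    exact ⟨z₀, hz₀P, hUPO ⟨hz₀U, hz₀P⟩⟩
  -- P ⊆ U by connectedness
  have hPsubU : P ⊆ U := by
    intro z hz
    by_contra hzU
    have hcover : P ⊆ O ∪ Uᶜ := by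
      intro w hw
      by_cases hwU : w ∈ U
      · exact Or.inl (hUPO ⟨hwU, hw⟩)
      · exact Or.inr hwU
    have hne2 : (P ∩ Uᶜ).Nonempty := ⟨z, hz, hzU⟩
    obtain ⟨w, hwP, hwO, hwUc⟩ := hPconn O Uᶜ hOopen hUclosed.isOpen_compl hcover hUPne hne2
    exact hwUc (hOHU w hwO (hPH hwP))
  -- conclusion by density of P in H
  intro x hx
  have hxU : x ∈ U := by
    have hxcl : x ∈ closure P := by
      rw [Metric.mem_closure_iff]
      intro ε hε
      obtain ⟨z, hzH, hzG, hzd⟩ := exists_near_avoiding H G hGlt x hx ε hε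
      refine ⟨z, ⟨hzH, fun hmem => ?_⟩, by rwa [dist_comm] at hzd⟩
      obtain ⟨W, hW, hzW⟩ := Set.mem_iUnion₂.1 hmem
      exact hzG W hW hzW
    have := closure_mono hPsubU hxcl
    rwa [hUclosed.closure_eq] at this
  exact hUsub hxU
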